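/- Let h : I → {1,...,b} be a function and P₁, P₂ finite nonempty subsets of I with C = |P₁∪P₂|, κ = C − |h(P₁∪P₂)|, and Jaccard similarity J = |P₁∩P₂|/C. If p := |h(P₁)∩h(P₂)| / |h(P₁∪P₂)|, then J − κ/C ≤ p. If moreover κ ≤ C/2, then p ≤ J + 3(κ/C) + 2(κ/C)². -/

import Mathlib

set_option maxHeartbeats 1000000 in
theorem aux7 (Cr Dr ar mr : ℝ) (hC : 0 < Cr) (hD : 0 < Dr) (hDC : Dr ≤ Cr)
    (hm : mr ≤ ar + (Cr - Dr)) (hk : Cr - Dr ≤ Cr/2) (ha : ar ≤ Cr)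
    (hk0 : 0 ≤ Cr - Dr) (ha0 : 0 ≤ ar) :
    mr * Cr^2 ≤ (ar*Cr + 3*(Cr-Dr)*Cr + 2*(Cr-Dr)^2) * Dr := by
  nlinarith [mul_nonneg hk0 (mul_nonneg hC.le (by linarith : (0:ℝ) ≤ Cr - 2*(Cr-Dr))),
    mul_nonneg hk0 (mul_nonneg hC.le (by linarith : (0:ℝ) ≤ Cr - ar)),
    mul_nonneg (mul_nonneg hk0 hk0) (by linarith : (0:ℝ) ≤ Cr - 2*(Cr-Dr)),
    mul_nonneg (by linarith : (0:ℝ) ≤ ar + (Cr - Dr) - mr) (sq_nonneg Cr)]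

/-- J − κ/C ≤ p, and if κ ≤ C/2 then p ≤ J + 3(κ/C) + 2(κ/C)². -/
theorem stmt7 {I : Type*} [DecidableEq I] (b : ℕ) (hb : 0 < b)
    (h : I → ℕ) (hrange : ∀ i, h i ∈ Finset.Icc 1 b)
    (P₁ P₂ : Finset I) (h₁ : P₁.Nonempty) (h₂ : P₂.Nonempty) :
    let C : ℝ := ((P₁ ∪ P₂).card : ℝ)
    let κ : ℝ := C - (((P₁ ∪ P₂).image h).card : ℝ)
    let J : ℝ := ((P₁ ∩ P₂).card : ℝ) / C
    let p : ℝ := ((P₁.image h ∩ P₂.image h).card : ℝ) / (((P₁ ∪ P₂).image h).card : ℝ)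
    J - κ / C ≤ p ∧ (κ ≤ C / 2 → p ≤ J + 3 * (κ / C) + 2 * (κ / C) ^ 2) := by
  intro C κ J p
  -- defect monotonicity
  have key : ∀ P Q : Finset I, ((P ∪ Q).image h).card + P.card ≤
      (P.image h).card + (P ∪ Q).card := by
    intro P Q
    have h1 : (P ∪ Q).image h ⊆ P.image h ∪ ((P ∪ Q) \ P).image h := by
      rw [← Finset.image_union]
      apply Finset.image_subset_image
      intro x hx
      simp only [Finset.mem_union, Finset.mem_sdiff]
      rcases Finset.mem_union.mp hx with h' | h'
      · exact Or.inl h'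
      · by_cases hp : x ∈ P
        · exact Or.inl hp
        · exact Or.inr ⟨Or.inr h', hp⟩
    have h2 : ((P ∪ Q) \ P).card + P.card = (P ∪ Q).card :=
      Finset.card_sdiff_add_card_eq_card Finset.subset_union_left
    calc ((P ∪ Q).image h).card + P.card
        ≤ (P.image h ∪ ((P ∪ Q) \ P).image h).card + P.card := by
          exact add_le_add_left (Finset.card_le_card h1) _
      _ ≤ ((P.image h).card + (((P ∪ Q) \ P).image h).card) + P.card :=
          add_le_add_left (Finset.card_union_le _ _) _
      _ ≤ ((P.image h).card + ((P ∪ Q) \ P).card) + P.card :=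
          add_le_add_left (add_le_add_right Finset.card_image_le _) _
      _ = (P.image h).card + (P ∪ Q).card := by omega
  have key1 := key P₁ P₂
  have key2 := key P₂ P₁
  rw [Finset.union_comm P₂ P₁] at key2
  have himg : (P₁ ∪ P₂).image h = P₁.image h ∪ P₂.image h := Finset.image_union P₁ P₂
  have hIE : ((P₁.image h) ∩ (P₂.image h)).card + ((P₁ ∪ P₂).image h).card
      = (P₁.image h).card + (P₂.image h).card := by
    rw [himg]; exact Finset.card_inter_add_card_union _ _
  have hIE2 : (P₁ ∪ P₂).card + (P₁ ∩ P₂).card = P₁.card + P₂.card :=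
    Finset.card_union_add_card_inter _ _
  have hDC : ((P₁ ∪ P₂).image h).card ≤ (P₁ ∪ P₂).card := Finset.card_image_le
  have hD1 : 1 ≤ ((P₁ ∪ P₂).image h).card := by
    have hne : ((P₁ ∪ P₂).image h).Nonempty :=
      (h₁.mono Finset.subset_union_left).image h
    exact Finset.card_pos.mpr hne
  have him1 : (P₁.image h).card ≤ P₁.card := Finset.card_image_le
  have him2 : (P₂.image h).card ≤ P₂.card := Finset.card_image_le
  -- pass to reals
  set Cn := (P₁ ∪ P₂).card
  set Dn := ((P₁ ∪ P₂).image h).card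
  set an := (P₁ ∩ P₂).card
  set mn := ((P₁.image h) ∩ (P₂.image h)).card
  have hCR : (0:ℝ) < (Cn:ℝ) := by exact_mod_cast lt_of_lt_of_le hD1 hDC
  have hDR : (0:ℝ) < (Dn:ℝ) := by exact_mod_cast hD1
  have hDCR : (Dn:ℝ) ≤ (Cn:ℝ) := by exact_mod_cast hDC
  have hmR : (mn:ℝ) + (Dn:ℝ) = (P₁.image h).card + (P₂.image h).card := by
    exact_mod_cast hIE
  have haR : (Cn:ℝ) + (an:ℝ) = P₁.card + P₂.card := by exact_mod_cast hIE2
  have hk1R : (Dn:ℝ) + (P₁.card:ℝ) ≤ (P₁.image h).card + Cn := by exact_mod_cast key1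
  have hk2R : (Dn:ℝ) + (P₂.card:ℝ) ≤ (P₂.image h).card + Cn := by exact_mod_cast key2
  have hi1R : ((P₁.image h).card:ℝ) ≤ P₁.card := by exact_mod_cast him1
  have hi2R : ((P₂.image h).card:ℝ) ≤ P₂.card := by exact_mod_cast him2
  have hmlow : (an:ℝ) - ((Cn:ℝ) - Dn) ≤ mn := by linarith
  have hmhigh : (mn:ℝ) ≤ an + ((Cn:ℝ) - Dn) := by linarith
  have haC : (an:ℝ) ≤ Cn := by
    exact_mod_cast Finset.card_le_card (Finset.inter_subset_union)
  have hm0 : (0:ℝ) ≤ mn := Nat.cast_nonneg _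
  have hk0 : (0:ℝ) ≤ (Cn:ℝ) - Dn := by linarith
  constructor
  · show (an:ℝ)/Cn - ((Cn:ℝ) - Dn)/Cn ≤ (mn:ℝ)/Dn
    rw [div_sub_div_same, div_le_div_iff₀ hCR hDR]
    nlinarith [mul_nonneg hm0 (sub_nonneg.2 hDCR)]
  · intro hκ
    have hκ' : (Cn:ℝ) - Dn ≤ Cn / 2 := hκ
    show (mn:ℝ)/Dn ≤ (an:ℝ)/Cn + 3 * (((Cn:ℝ) - Dn)/Cn) + 2 * (((Cn:ℝ) - Dn)/Cn)^2
    have e1 : (0:ℝ) ≤ (Cn:ℝ) - 2*((Cn:ℝ) - Dn) := by linarith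
    have e2 : (0:ℝ) ≤ (Cn:ℝ) - an := by linarith
    have hrw : (an:ℝ)/Cn + 3 * (((Cn:ℝ) - Dn)/Cn) + 2 * (((Cn:ℝ) - Dn)/Cn)^2
        = ((an:ℝ)*Cn + 3*((Cn:ℝ)-Dn)*Cn + 2*((Cn:ℝ)-Dn)^2) / Cn^2 := by
      field_simp
    rw [hrw, div_le_div_iff₀ hDR (pow_pos hCR 2)]
    exact aux7 _ _ _ _ hCR hDR hDCR hmhigh hκ' haC hk0 (Nat.cast_nonneg _)
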